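/- (Sign of the SEIR switching function near ultimate tangentiality.) Let η > 0 and let β, I : ℝ → ℝ be functions. Suppose λ₁, λ₂, λ₃ : ℝ → ℝ are differentiable at t̄, satisfy λ₂'(t̄) = η λ₂(t̄) − η λ₃(t̄) and λ₁'(t̄) = β(t̄) I(t̄) λ₁(t̄) − β(t̄) I(t̄) λ₂(t̄), and the terminal condition (λ₁(t̄), λ₂(t̄), λ₃(t̄)) = (0, 0, 1). Then (λ₂ − λ₁)'(t̄) = −η < 0 and (λ₂ − λ₁)(t̄) = 0, and consequently there exists ε > 0 such that λ₂(t) − λ₁(t) > 0 for all t ∈ (t̄ − ε, t̄); hence the barrier input satisfies β̄(t) = β_min on an interval immediately before the tangency time. -/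

import Mathlib

/-- Sign of the SEIR switching function near ultimate tangentiality: with the
terminal condition `(lam₁, lam₂, lam₃)(t̄) = (0, 0, 1)`, the switching function
`lam₂ − lam₁` vanishes at `t̄` with derivative `−η < 0`, hence is positive on an
interval immediately before `t̄`; consequently the barrier input `β̄` (which
equals `β_min` whenever `lam₂ − lam₁ > 0`) equals `β_min` there. -/
theorem seir_switching_function_sign_near_tangency
    (η βmin tbar : ℝ) (hη : 0 < η)
    (β I lam₁ lam₂ lam₃ betaBar : ℝ → ℝ)
    (hlam₂ : HasDerivAt lam₂ (η * lam₂ tbar - η * lam₃ tbar) tbar)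
    (hlam₁ : HasDerivAt lam₁
      (β tbar * I tbar * lam₁ tbar - β tbar * I tbar * lam₂ tbar) tbar)
    (hterm : lam₁ tbar = 0 ∧ lam₂ tbar = 0 ∧ lam₃ tbar = 1)
    (hbar : ∀ t, 0 < lam₂ t - lam₁ t → betaBar t = βmin) :
    HasDerivAt (fun t => lam₂ t - lam₁ t) (-η) tbar ∧
    lam₂ tbar - lam₁ tbar = 0 ∧
    ∃ ε > 0, ∀ t ∈ Set.Ioo (tbar - ε) tbar,
      0 < lam₂ t - lam₁ t ∧ betaBar t = βmin := by
  obtain ⟨h1, h2, h3⟩ := hterm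
  simp only [h1, h2, h3] at hlam₂ hlam₁
  have hd : HasDerivAt (fun t => lam₂ t - lam₁ t) (-η) tbar := by
    have := hlam₂.sub hlam₁
    exact this.congr_deriv (by ring)
  refine ⟨hd, by rw [h1, h2]; ring, ?_⟩
  set f : ℝ → ℝ := fun t => lam₂ t - lam₁ t with hf
  have hf0 : f tbar = 0 := by simp [hf, h1, h2]
  have hslope : Filter.Tendsto (slope f tbar) (nhdsWithin tbar {tbar}ᶜ) (nhds (-η)) :=
    (hasDerivAt_iff_tendsto_slope.mp hd)
  have hslope' : Filter.Tendsto (slope f tbar) (nhdsWithin tbar (Set.Iio tbar)) (nhds (-η)) :=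
    hslope.mono_left (nhdsWithin_mono _ (fun x hx => ne_of_lt hx))
  have hev : ∀ᶠ t in nhdsWithin tbar (Set.Iio tbar), slope f tbar t < 0 :=
    hslope'.eventually_lt_const (by linarith)
  rw [eventually_nhdsWithin_iff] at hev
  rw [Metric.eventually_nhds_iff] at hev
  obtain ⟨ε, hε, hball⟩ := hev
  refine ⟨ε, hε, fun t ht => ?_⟩
  obtain ⟨ht1, ht2⟩ := ht
  have hdist : dist t tbar < ε := by
    rw [Real.dist_eq, abs_of_neg (by linarith)]
    linarith
  have hs := hball hdist ht2
  have hslope_eq : slope f tbar t = f t / (t - tbar) := by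
    rw [slope_def_field, hf0]
    rw [sub_zero]
  rw [hslope_eq] at hs
  have hpos : 0 < f t := by
    by_contra h
    push_neg at h
    have : 0 ≤ f t / (t - tbar) := div_nonneg_of_nonpos h (by linarith)
    linarith
  exact ⟨hpos, hbar t hpos⟩
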